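/- Let ŵ, τ̂₁², τ̂₂² be fixed with τ̂₁², τ̂₂² ∈ [c, C] and |ŵ| ≤ C for some 0 < c ≤ C. For any M > 0 there exist W, l, L > 0 such that for every (w, τ₁², τ₂²) ∈ (ℝ × (0,∞)²) \ ([−W, W] × [l, L] × [l, L]), the function g(w, τ₁², τ₂²) = −(1/2)[(w − ŵ)² τ̂₂² / τ₁² + φ(τ̂₁²/τ₁²) + φ(τ̂₂²/τ₂²)] satisfies g(w, τ₁², τ₂²) < −M, where φ(u) = u − 1 − log u. -/
import Mathlib


/-- `φ(u) = u - 1 - log u`. -/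
noncomputable def phiFn (u : ℝ) : ℝ := u - 1 - Real.log u

/-- The normalized log-likelihood difference `g` for the bivariate Gaussian SEM. -/
noncomputable def gFn (wHat t1Hat t2Hat : ℝ) (w τ1 τ2 : ℝ) : ℝ :=
  -(1 / 2) * ((w - wHat) ^ 2 * t2Hat / τ1 + phiFn (t1Hat / τ1) + phiFn (t2Hat / τ2))

lemma phi_nonneg (u : ℝ) (hu : 0 < u) : 0 ≤ phiFn u := by
  have := Real.log_le_sub_one_of_pos hu
  unfold phiFn; linarith

lemma phi_sq (u : ℝ) (hu : 0 < u) : (Real.sqrt u - 1) ^ 2 ≤ phiFn u := by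
  have hs : 0 < Real.sqrt u := Real.sqrt_pos.2 hu
  have hlog : Real.log (Real.sqrt u) ≤ Real.sqrt u - 1 := Real.log_le_sub_one_of_pos hs
  have h2 : Real.log u = 2 * Real.log (Real.sqrt u) := by
    rw [Real.log_sqrt hu.le]; ring
  have hsq : Real.sqrt u ^ 2 = u := Real.sq_sqrt hu.le
  unfold phiFn; nlinarith

lemma phi_log (u : ℝ) (hu : 0 < u) : -1 - Real.log u ≤ phiFn u := by
  unfold phiFn; linarith

set_option maxHeartbeats 1000000 in
theorem stmt_7 (c C : ℝ) (hc : 0 < c) (hcC : c ≤ C)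
    (wHat t1Hat t2Hat : ℝ)
    (h1 : t1Hat ∈ Set.Icc c C) (h2 : t2Hat ∈ Set.Icc c C) (hw : |wHat| ≤ C)
    (M : ℝ) (hM : 0 < M) :
    ∃ W l L : ℝ, 0 < W ∧ 0 < l ∧ 0 < L ∧
      ∀ w τ1 τ2 : ℝ, 0 < τ1 → 0 < τ2 →
        ¬(w ∈ Set.Icc (-W) W ∧ τ1 ∈ Set.Icc l L ∧ τ2 ∈ Set.Icc l L) →
        gFn wHat t1Hat t2Hat w τ1 τ2 < -M := by
  obtain ⟨hc1, hC1⟩ := h1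
  obtain ⟨hc2, hC2⟩ := h2
  have hC : 0 < C := lt_of_lt_of_le hc hcC
  set A : ℝ := Real.sqrt (2 * M) + 2 with hAdef
  have hsM : Real.sqrt (2 * M) ^ 2 = 2 * M := Real.sq_sqrt (by linarith)
  have hsM0 : 0 ≤ Real.sqrt (2 * M) := Real.sqrt_nonneg _
  have hA0 : 0 < A := by rw [hAdef]; linarith
  set l : ℝ := c / A ^ 2 with hldef
  set L : ℝ := C * Real.exp (2 * M + 1) with hLdef
  have hl0 : 0 < l := div_pos hc (by positivity)
  have hL0 : 0 < L := by positivity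
  set W : ℝ := C + Real.sqrt (2 * M * L / c) + 1 with hWdef
  have hsW : Real.sqrt (2 * M * L / c) ^ 2 = 2 * M * L / c := Real.sq_sqrt (by positivity)
  have hsW0 : 0 ≤ Real.sqrt (2 * M * L / c) := Real.sqrt_nonneg _
  have hW0 : 0 < W := by rw [hWdef]; linarith
  refine ⟨W, l, L, hW0, hl0, hL0, ?_⟩
  have key : ∀ t τ : ℝ, c ≤ t → t ≤ C → 0 < τ → τ ∉ Set.Icc l L →
      2 * M < phiFn (t / τ) := by
    intro t τ hct hCt hτ hmem
    have ht0 : 0 < t := lt_of_lt_of_le hc hct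
    have hu0 : 0 < t / τ := div_pos ht0 hτ
    rw [Set.mem_Icc, not_and_or, not_le, not_le] at hmem
    rcases hmem with h | h
    · -- τ < l : small τ, large u
      have hu : A ^ 2 < t / τ := by
        have h1 : c / l = A ^ 2 := by
          rw [hldef]; field_simp
        calc A ^ 2 = c / l := h1.symm
          _ < c / τ := div_lt_div_of_pos_left hc hτ h
          _ ≤ t / τ := by gcongr
      have hs : A < Real.sqrt (t / τ) := by
        rw [show A = Real.sqrt (A ^ 2) from (Real.sqrt_sq hA0.le).symm]
        exact Real.sqrt_lt_sqrt (by positivity) hu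
      have hφ := phi_sq (t / τ) hu0
      nlinarith [Real.sqrt_nonneg (t / τ)]
    · -- L < τ : large τ, small u
      have hlog : Real.log (t / τ) < -(2 * M + 1) := by
        rw [Real.log_div ht0.ne' hτ.ne']
        have h1 : Real.log t ≤ Real.log C := Real.log_le_log ht0 hCt
        have h2 : Real.log L < Real.log τ := Real.log_lt_log hL0 h
        have h3 : Real.log L = Real.log C + (2 * M + 1) := by
          rw [hLdef, Real.log_mul hC.ne' (Real.exp_ne_zero _), Real.log_exp]
        linarith
      have := phi_log (t / τ) hu0
      linarith
  intro w τ1 τ2 hτ1 hτ2 hnot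
  have hu1 : 0 < t1Hat / τ1 := div_pos (lt_of_lt_of_le hc hc1) hτ1
  have hu2 : 0 < t2Hat / τ2 := div_pos (lt_of_lt_of_le hc hc2) hτ2
  have hphi1 := phi_nonneg _ hu1
  have hphi2 := phi_nonneg _ hu2
  have ht2Hat0 : (0:ℝ) ≤ t2Hat := le_trans hc.le hc2
  have hT1 : 0 ≤ (w - wHat) ^ 2 * t2Hat / τ1 :=
    div_nonneg (mul_nonneg (sq_nonneg _) ht2Hat0) hτ1.le
  suffices h : 2 * M < (w - wHat) ^ 2 * t2Hat / τ1 + phiFn (t1Hat / τ1) + phiFn (t2Hat / τ2) by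
    unfold gFn; linarith
  by_cases hτ1m : τ1 ∈ Set.Icc l L
  · by_cases hτ2m : τ2 ∈ Set.Icc l L
    · -- w is outside [-W, W]
      have hwout : w ∉ Set.Icc (-W) W := fun hw' => hnot ⟨hw', hτ1m, hτ2m⟩
      rw [Set.mem_Icc, not_and_or, not_le, not_le] at hwout
      obtain ⟨hwC1, hwC2⟩ := abs_le.mp hw
      have hWC : W - C = Real.sqrt (2 * M * L / c) + 1 := by rw [hWdef]; ring
      have hWC0 : 0 ≤ W - C := by rw [hWC]; linarith
      have hsq : (W - C) ^ 2 < (w - wHat) ^ 2 := by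
        rcases hwout with h | h
        · have h1 : W - C < wHat - w := by linarith
          have h2 := pow_lt_pow_left₀ h1 hWC0 (n := 2) (by norm_num)
          have heq : (wHat - w) ^ 2 = (w - wHat) ^ 2 := by ring
          linarith
        · have h1 : W - C < w - wHat := by linarith
          exact pow_lt_pow_left₀ h1 hWC0 (by norm_num)
      obtain ⟨hl1, hL1⟩ := hτ1m
      have hmain : 2 * M < (w - wHat) ^ 2 * t2Hat / τ1 := by
        have hlt : 2 * M * L / c < (W - C) ^ 2 := by
          rw [hWC]; nlinarith [hsW, hsW0]
        have step1 : (2 * M * L / c) * c / L < (W - C) ^ 2 * c / L := by gcongr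
        have step2 : (W - C) ^ 2 * c / L ≤ (w - wHat) ^ 2 * t2Hat / τ1 :=
          div_le_div₀ (mul_nonneg (sq_nonneg _) ht2Hat0)
            (mul_le_mul hsq.le hc2 hc.le (sq_nonneg _)) hτ1 hL1
        have heq : (2 * M * L / c) * c / L = 2 * M := by
          field_simp
        linarith
      linarith
    · have := key t2Hat τ2 hc2 hC2 hτ2 hτ2m; linarith
  · have := key t1Hat τ1 hc1 hC1 hτ1 hτ1m; linarith
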